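/- Let k ≥ 2 and let A, B, C be k-element sets of integers with B ≠ C and A + B = A + C. Then the number of such triples (A, B, C) with all elements in {1,…,N} is at most C_k · N^{3k/2} for some constant C_k depending only on k. -/

import Mathlib

open Finset Pointwise

private def sumIter (D : Finset ℤ) : ℕ → Finset ℤ
  | 0 => {0}
  | n + 1 => sumIter D n + D

private lemma sumIter_card_le (D : Finset ℤ) (n : ℕ) : (sumIter D n).card ≤ D.card ^ n := by
  induction n with
  | zero => simp [sumIter]
  | succ n ih =>
    calc (sumIter D (n+1)).card ≤ (sumIter D n).card * D.card := Finset.card_add_le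
      _ ≤ D.card ^ n * D.card := Nat.mul_le_mul_right _ ih
      _ = D.card ^ (n+1) := (pow_succ _ _).symm

private lemma sumIter_succ_subset (D : Finset ℤ) (h0 : (0:ℤ) ∈ D) (n : ℕ) :
    sumIter D n ⊆ sumIter D (n + 1) := by
  intro x hx
  have : x + 0 ∈ sumIter D n + D := Finset.add_mem_add hx h0
  simpa [sumIter] using this

private lemma sumIter_mono (D : Finset ℤ) (h0 : (0:ℤ) ∈ D) {m n : ℕ} (h : m ≤ n) :
    sumIter D m ⊆ sumIter D n := by
  induction h with
  | refl => exact Finset.Subset.refl _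
  | step h ih => exact ih.trans (sumIter_succ_subset D h0 _)

private def Kiter (A D : Finset ℤ) (a0 : ℤ) : ℕ → Finset ℤ
  | 0 => {a0}
  | n + 1 => Kiter A D a0 n ∪ A.filter (fun x => ∃ y ∈ Kiter A D a0 n, x - y ∈ D)

private lemma Kiter_subset (A D : Finset ℤ) (a0 : ℤ) (ha0 : a0 ∈ A) (n : ℕ) :
    Kiter A D a0 n ⊆ A := by
  induction n with
  | zero => simpa [Kiter] using ha0
  | succ n ih =>
    intro x hx
    rcases Finset.mem_union.mp hx with h | h
    · exact ih h
    · exact (Finset.mem_filter.mp h).1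

private lemma Kiter_succ_subset (A D : Finset ℤ) (a0 : ℤ) (n : ℕ) :
    Kiter A D a0 n ⊆ Kiter A D a0 (n + 1) :=
  Finset.subset_union_left

private lemma Kiter_sub_sumIter (A D : Finset ℤ) (a0 : ℤ) (n : ℕ) :
    Kiter A D a0 n ⊆ {a0} + sumIter (D ∪ {0}) n := by
  induction n with
  | zero =>
    intro x hx
    simp only [Kiter, Finset.mem_singleton] at hx
    rw [hx]
    have : a0 + 0 ∈ ({a0} : Finset ℤ) + sumIter (D ∪ {0}) 0 :=
      Finset.add_mem_add (Finset.mem_singleton_self _) (by simp [sumIter])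
    simpa using this
  | succ n ih =>
    intro x hx
    rcases Finset.mem_union.mp hx with h | h
    · exact Finset.add_subset_add_left
        (sumIter_succ_subset _ (by simp) n) (ih h)
    · obtain ⟨-, y, hy, hxy⟩ := Finset.mem_filter.mp h
      obtain ⟨a, ha, s, hs, has⟩ := Finset.mem_add.mp (ih hy)
      have : a + (s + (x - y)) ∈ ({a0} : Finset ℤ) + sumIter (D ∪ {0}) (n + 1) :=
        Finset.add_mem_add ha (Finset.add_mem_add hs (Finset.mem_union_left _ hxy))
      have hval : a + (s + (x - y)) = x := by omega
      rwa [hval] at this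

private lemma Kiter_stab (A D : Finset ℤ) (a0 : ℤ) (n : ℕ)
    (h : Kiter A D a0 n = Kiter A D a0 (n + 1)) :
    ∀ m, n ≤ m → Kiter A D a0 m = Kiter A D a0 n := by
  intro m hm
  induction hm with
  | refl => rfl
  | @step m hm ih =>
    have h2 : Kiter A D a0 (m+1) = Kiter A D a0 (n+1) := by
      show Kiter A D a0 m ∪ _ = Kiter A D a0 n ∪ _
      rw [ih]
    rw [h2, ← h]

private lemma Kiter_mono (A D : Finset ℤ) (a0 : ℤ) {m n : ℕ} (h : m ≤ n) :
    Kiter A D a0 m ⊆ Kiter A D a0 n := by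
  induction h with
  | refl => exact Finset.Subset.refl _
  | step h ih => exact ih.trans (Kiter_succ_subset A D a0 _)

private lemma Kiter_closed (A D : Finset ℤ) (a0 : ℤ) (ha0 : a0 ∈ A) :
    ∀ x ∈ A, (∃ y ∈ Kiter A D a0 A.card, x - y ∈ D) → x ∈ Kiter A D a0 A.card := by
  by_cases hstab : ∃ n ≤ A.card, Kiter A D a0 n = Kiter A D a0 (n + 1)
  · obtain ⟨n, hn, he⟩ := hstab
    have h1 : Kiter A D a0 A.card = Kiter A D a0 n := Kiter_stab _ _ _ _ he _ hn
    have h2 : Kiter A D a0 (A.card + 1) = Kiter A D a0 n := Kiter_stab _ _ _ _ he _ (by omega)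
    intro x hx hy
    have hx1 : x ∈ Kiter A D a0 (A.card + 1) :=
      Finset.mem_union_right _ (Finset.mem_filter.mpr ⟨hx, hy⟩)
    rw [h2, ← h1] at hx1
    exact hx1
  · push_neg at hstab
    exfalso
    have hgrow : ∀ n, n ≤ A.card → n + 1 ≤ (Kiter A D a0 n).card := by
      intro n
      induction n with
      | zero => intro _; simp [Kiter]
      | succ n ih =>
        intro hn
        have hne := hstab n (by omega)
        have hss : Kiter A D a0 n ⊂ Kiter A D a0 (n + 1) :=
          Finset.ssubset_iff_subset_ne.mpr ⟨Kiter_succ_subset A D a0 n, hne⟩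
        have hc := Finset.card_lt_card hss
        have := ih (by omega)
        omega
    have h1 := hgrow A.card le_rfl
    have h2 := Finset.card_le_card (Kiter_subset A D a0 ha0 A.card)
    omega

private lemma cover_lemma (k : ℕ) (E : Finset ℤ) (h0 : (0:ℤ) ∉ E)
    (A : Finset ℤ) (hcard : A.card ≤ k) (hprop : ∀ a ∈ A, ∃ e ∈ E, a + e ∈ A) :
    ∃ S, S ⊆ A ∧ 2 * S.card ≤ A.card ∧ A ⊆ S + sumIter (E ∪ -E ∪ {0}) k := by
  induction A using Finset.strongInductionOn with
  | _ A ih =>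
  rcases A.eq_empty_or_nonempty with rfl | ⟨a0, ha0⟩
  · exact ⟨∅, by simp⟩
  · set D : Finset ℤ := E ∪ -E with hD
    set KK := Kiter A D a0 A.card with hKK
    have hKsub : KK ⊆ A := Kiter_subset A D a0 ha0 A.card
    have ha0K : a0 ∈ KK := by
      have : a0 ∈ Kiter A D a0 0 := by simp [Kiter]
      exact Kiter_mono A D a0 (Nat.zero_le _) this
    obtain ⟨e, he, hae⟩ := hprop a0 ha0
    have haeK : a0 + e ∈ KK := by
      have h1 : a0 + e ∈ Kiter A D a0 1 := by
        refine Finset.mem_union_right _ (Finset.mem_filter.mpr ⟨hae, a0, ?_, ?_⟩)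
        · simp [Kiter]
        · simp [hD, Finset.mem_union, he]
      exact Kiter_mono A D a0 (by
        have : 1 ≤ A.card := Finset.card_pos.mpr ⟨a0, ha0⟩
        omega) h1
    have hK2 : 2 ≤ KK.card := by
      have hne : a0 ≠ a0 + e := by
        intro h
        have : e = 0 := by omega
        exact h0 (this ▸ he)
      exact Finset.one_lt_card.mpr ⟨a0, ha0K, a0 + e, haeK, hne⟩
    have hclosed := Kiter_closed A D a0 ha0
    set A' := A \ KK with hA'
    have hA'prop : ∀ a ∈ A', ∃ e ∈ E, a + e ∈ A' := by
      intro a ha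
      obtain ⟨haA, haK⟩ := Finset.mem_sdiff.mp ha
      obtain ⟨e', he', hae'⟩ := hprop a haA
      refine ⟨e', he', Finset.mem_sdiff.mpr ⟨hae', ?_⟩⟩
      intro hmem
      exact haK (hclosed a haA ⟨a + e', hmem, by
        have : a - (a + e') = -e' := by ring
        rw [this]
        exact Finset.mem_union_right _ (Finset.neg_mem_neg he')⟩)
    have hss : A' ⊂ A := by
      refine Finset.ssubset_iff_of_subset (Finset.sdiff_subset) |>.mpr ⟨a0, ha0, ?_⟩
      simp [hA', ha0K]
    obtain ⟨S', hS'sub, hS'card, hS'cover⟩ :=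
      ih A' hss (le_trans (Finset.card_le_card hss.subset) hcard)
        hA'prop
    have ha0S' : a0 ∉ S' := fun h => (Finset.mem_sdiff.mp (hS'sub h)).2 ha0K
    refine ⟨insert a0 S', ?_, ?_, ?_⟩
    · exact Finset.insert_subset ha0 (hS'sub.trans Finset.sdiff_subset)
    · rw [Finset.card_insert_of_notMem ha0S']
      have hcd : A'.card = A.card - KK.card := Finset.card_sdiff_of_subset hKsub
      have := Finset.card_le_card hKsub
      omega
    · intro x hx
      by_cases hxK : x ∈ KK
      · have hx1 : x ∈ ({a0} : Finset ℤ) + sumIter (D ∪ {0}) A.card :=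
          Kiter_sub_sumIter A D a0 A.card hxK
        have hsub : ({a0} : Finset ℤ) + sumIter (D ∪ {0}) A.card ⊆
            insert a0 S' + sumIter (E ∪ -E ∪ {0}) k := by
          refine Finset.add_subset_add ?_ ?_
          · simp
          · rw [hD]
            exact sumIter_mono _ (by simp) hcard
        exact hsub hx1
      · have : x ∈ A' := Finset.mem_sdiff.mpr ⟨hx, hxK⟩
        exact Finset.add_subset_add (Finset.subset_insert _ _) (Finset.Subset.refl _)
          (hS'cover this)

private def QB (k : ℕ) (B : Finset ℤ) : Finset ℤ :=
  (Finset.Icc 1 k).biUnion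
    (fun L => ((sumIter B L).filter (fun s => (L : ℤ) ∣ s)).image (fun s => s / (L : ℤ)))

private lemma QB_card_le (k : ℕ) (B : Finset ℤ) (hB : B.card ≤ k) :
    (QB k B).card ≤ k * k ^ k := by
  calc (QB k B).card
      ≤ ∑ L ∈ Finset.Icc 1 k,
          (((sumIter B L).filter (fun s => (L : ℤ) ∣ s)).image (fun s => s / (L : ℤ))).card :=
        Finset.card_biUnion_le
    _ ≤ ∑ L ∈ Finset.Icc 1 k, k ^ k := by
        refine Finset.sum_le_sum ?_
        intro L hL
        obtain ⟨hL1, hL2⟩ := Finset.mem_Icc.mp hL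
        calc (((sumIter B L).filter (fun s => (L : ℤ) ∣ s)).image (fun s => s / (L : ℤ))).card
            ≤ ((sumIter B L).filter (fun s => (L : ℤ) ∣ s)).card := Finset.card_image_le
          _ ≤ (sumIter B L).card := Finset.card_le_card (Finset.filter_subset _ _)
          _ ≤ B.card ^ L := sumIter_card_le B L
          _ ≤ k ^ L := Nat.pow_le_pow_left hB L
          _ ≤ k ^ k := Nat.pow_le_pow_right (by omega) hL2
    _ ≤ k * k ^ k := by
        rw [Finset.sum_const]
        have : (Finset.Icc 1 k).card ≤ k := by simp
        exact Nat.mul_le_mul_right _ this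

private lemma mem_QB (k : ℕ) (B A : Finset ℤ) (c : ℤ) (hA : A.Nonempty) (hcard : A.card ≤ k)
    (h : ∀ a ∈ A, ∃ a' ∈ A, ∃ b ∈ B, a + c = a' + b) : c ∈ QB k B := by
  classical
  obtain ⟨a0, ha0⟩ := hA
  have hh : ∀ a : ℤ, ∃ p : ℤ × ℤ, a ∈ A → p.1 ∈ A ∧ p.2 ∈ B ∧ a + c = p.1 + p.2 := by
    intro a
    by_cases ha : a ∈ A
    · obtain ⟨a', ha', b, hb, heq⟩ := h a ha
      exact ⟨(a', b), fun _ => ⟨ha', hb, heq⟩⟩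
    · exact ⟨(0, 0), fun h' => absurd h' ha⟩
  choose F hF using hh
  set f : ℤ → ℤ := fun a => (F a).1 with hf
  set g : ℕ → ℤ := fun n => f^[n] a0 with hg
  have gmem : ∀ n, g n ∈ A := by
    intro n
    induction n with
    | zero => simpa [hg] using ha0
    | succ n ih =>
      have : g (n + 1) = f (g n) := Function.iterate_succ_apply' f n a0
      rw [this]
      exact (hF (g n) ih).1
  have tele : ∀ m n : ℕ, ∃ s ∈ sumIter B n, g m + n * c = g (m + n) + s := by
    intro m n
    induction n with
    | zero => exact ⟨0, by simp [sumIter], by simp⟩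
    | succ n ih =>
      obtain ⟨s, hs, heq⟩ := ih
      obtain ⟨hfa, hb, heqb⟩ := hF (g (m + n)) (gmem (m + n))
      have hstep : g (m + n) + c = g (m + n + 1) + (F (g (m + n))).2 := by
        have : g (m + n + 1) = f (g (m + n)) := Function.iterate_succ_apply' f (m + n) a0
        rw [this]
        exact heqb
      refine ⟨s + (F (g (m + n))).2, Finset.add_mem_add hs hb, ?_⟩
      have : (↑(n + 1) : ℤ) * c = n * c + c := by push_cast; ring
      rw [show m + (n + 1) = m + n + 1 from rfl, this]
      omega
  have hmap : ∀ i ∈ Finset.range (k + 1), g i ∈ A := fun i _ => gmem i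
  have hlt : A.card < (Finset.range (k + 1)).card := by simp; omega
  obtain ⟨i, hi, j, hj, hij, hgij⟩ :=
    Finset.exists_ne_map_eq_of_card_lt_of_maps_to hlt hmap
  have key : ∀ i j : ℕ, i < j → j < k + 1 → g i = g j → c ∈ QB k B := by
    intro i j hlt' hjk hgij
    obtain ⟨s, hs, heq⟩ := tele i (j - i)
    rw [show i + (j - i) = j by omega, ← hgij] at heq
    have hLc : ((j - i : ℕ) : ℤ) * c = s := by omega
    have hL1 : 1 ≤ j - i := by omega
    have hL2 : j - i ≤ k := by omega
    refine Finset.mem_biUnion.mpr ⟨j - i, Finset.mem_Icc.mpr ⟨hL1, hL2⟩, ?_⟩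
    refine Finset.mem_image.mpr ⟨s, Finset.mem_filter.mpr ⟨hs, ⟨c, hLc.symm⟩⟩, ?_⟩
    rw [← hLc]
    exact Int.mul_ediv_cancel_left c (by exact_mod_cast (by omega : (j - i : ℕ) ≠ 0))
  rcases Ne.lt_or_gt hij with h' | h'
  · exact key i j h' (Finset.mem_range.mp hj) hgij
  · exact key j i h' (Finset.mem_range.mp hi) hgij.symm

private lemma count_A (k : ℕ) (N : ℕ) (E : Finset ℤ) (hE : (0:ℤ) ∉ E) (hEcard : E.card ≤ k) :
    (((Finset.Icc (1:ℤ) N).powersetCard k).filter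
      (fun A => ∀ a ∈ A, ∃ e ∈ E, a + e ∈ A)).card ≤
    N.choose (k / 2) * ((k / 2) * (2 * k + 1) ^ k).choose k := by
  set F := sumIter (E ∪ -E ∪ {0}) k with hF
  have hFcard : F.card ≤ (2 * k + 1) ^ k := by
    have h1 : (E ∪ -E ∪ {0} : Finset ℤ).card ≤ 2 * k + 1 := by
      calc (E ∪ -E ∪ {0} : Finset ℤ).card ≤ (E ∪ -E : Finset ℤ).card + 1 :=
            le_trans (Finset.card_union_le _ _) (by simp)
        _ ≤ E.card + (-E : Finset ℤ).card + 1 := by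
            have := Finset.card_union_le E (-E)
            omega
        _ ≤ 2 * k + 1 := by
            rw [Finset.card_neg]
            omega
    calc F.card ≤ (E ∪ -E ∪ {0} : Finset ℤ).card ^ k := sumIter_card_le _ k
      _ ≤ (2 * k + 1) ^ k := Nat.pow_le_pow_left h1 k
  set m := k / 2 with hm
  have hsub : (((Finset.Icc (1:ℤ) N).powersetCard k).filter
      (fun A => ∀ a ∈ A, ∃ e ∈ E, a + e ∈ A)) ⊆
      ((Finset.Icc (1:ℤ) N).powersetCard m).biUnion (fun S => (S + F).powersetCard k) := by
    intro A hA
    obtain ⟨hA1, hA2⟩ := Finset.mem_filter.mp hA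
    obtain ⟨hAsub, hAcard⟩ := Finset.mem_powersetCard.mp hA1
    obtain ⟨S0, hS0A, hS0card, hS0cover⟩ := cover_lemma k E hE A (le_of_eq hAcard) hA2
    obtain ⟨S, hS0S, hSA, hScard⟩ :=
      Finset.exists_subsuperset_card_eq (n := m) hS0A (by omega) (by omega)
    refine Finset.mem_biUnion.mpr ⟨S, ?_, ?_⟩
    · exact Finset.mem_powersetCard.mpr ⟨hSA.trans hAsub, hScard⟩
    · refine Finset.mem_powersetCard.mpr ⟨?_, hAcard⟩
      exact hS0cover.trans (Finset.add_subset_add hS0S (Finset.Subset.refl _))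
  calc (((Finset.Icc (1:ℤ) N).powersetCard k).filter
      (fun A => ∀ a ∈ A, ∃ e ∈ E, a + e ∈ A)).card
      ≤ (((Finset.Icc (1:ℤ) N).powersetCard m).biUnion (fun S => (S + F).powersetCard k)).card :=
        Finset.card_le_card hsub
    _ ≤ ∑ S ∈ (Finset.Icc (1:ℤ) N).powersetCard m, ((S + F).powersetCard k).card :=
        Finset.card_biUnion_le
    _ ≤ ∑ S ∈ (Finset.Icc (1:ℤ) N).powersetCard m, (m * (2 * k + 1) ^ k).choose k := by
        refine Finset.sum_le_sum ?_
        intro S hS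
        rw [Finset.card_powersetCard]
        refine Nat.choose_le_choose k ?_
        calc (S + F).card ≤ S.card * F.card := Finset.card_add_le
          _ ≤ m * (2 * k + 1) ^ k := by
              have hScard := (Finset.mem_powersetCard.mp hS).2
              exact Nat.mul_le_mul (le_of_eq hScard) hFcard
    _ = ((Finset.Icc (1:ℤ) N).powersetCard m).card * (m * (2 * k + 1) ^ k).choose k := by
        rw [Finset.sum_const, smul_eq_mul]
    _ ≤ N.choose m * (m * (2 * k + 1) ^ k).choose k := by
        rw [Finset.card_powersetCard]
        have : (Finset.Icc (1:ℤ) N).card = N := by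
          rw [Int.card_Icc]
          simp
        rw [this]

theorem count_C3_upper (k : ℕ) (hk : 2 ≤ k) :
    ∃ C : ℝ, 0 < C ∧ ∀ N : ℕ,
      ((((((Finset.Icc (1 : ℤ) N).powersetCard k) ×ˢ ((Finset.Icc (1 : ℤ) N).powersetCard k)) ×ˢ
          ((Finset.Icc (1 : ℤ) N).powersetCard k)).filter
        (fun q => q.1.2 ≠ q.2 ∧ q.1.1 + q.1.2 = q.1.1 + q.2)).card : ℝ) ≤
        C * (N : ℝ) ^ ((3 * (k : ℝ)) / 2) := by
  set D2 : ℕ := ((k / 2) * (2 * k + 1) ^ k).choose k with hD2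
  set Ck : ℕ := (k * k ^ k) * (D2 * 2 ^ (k * k * k)) + 1 with hCkdef
  refine ⟨(Ck : ℝ), by positivity, ?_⟩
  intro N
  set P := (Finset.Icc (1 : ℤ) N).powersetCard k with hP
  -- the subset step
  have hsub : (((P ×ˢ P) ×ˢ P).filter
        (fun q => q.1.2 ≠ q.2 ∧ q.1.1 + q.1.2 = q.1.1 + q.2)) ⊆
      P.biUnion (fun B => ((QB k B).filter (fun c => c ∉ B)).biUnion (fun c =>
        (P.filter (fun A => ∀ a ∈ A, ∃ e ∈ B.image (fun b => c - b), a + e ∈ A)).biUnion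
          (fun A => ({(A, B)} : Finset (Finset ℤ × Finset ℤ)) ×ˢ (A + B - A).powerset))) := by
    rintro ⟨⟨A, B⟩, C⟩ hq
    simp only [Finset.mem_filter, Finset.mem_product] at hq
    obtain ⟨⟨⟨hAmem, hBmem⟩, hCmem⟩, hne, heq⟩ := hq
    obtain ⟨hAsub, hAcard⟩ := Finset.mem_powersetCard.mp hAmem
    obtain ⟨hBsub, hBcard⟩ := Finset.mem_powersetCard.mp hBmem
    obtain ⟨hCsub, hCcard⟩ := Finset.mem_powersetCard.mp hCmem
    have hnsub : ¬ (C ⊆ B) := by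
      intro h
      exact hne (Finset.eq_of_subset_of_card_le h (by omega)).symm
    obtain ⟨c, hcC, hcB⟩ := Finset.not_subset.mp hnsub
    have hAne : A.Nonempty := Finset.card_pos.mp (by omega)
    have hall : ∀ a ∈ A, ∃ a' ∈ A, ∃ b ∈ B, a + c = a' + b := by
      intro a ha
      have hmem2 : a + c ∈ A + B := by
        rw [heq]
        exact Finset.add_mem_add ha hcC
      obtain ⟨a', ha', b, hb, hab⟩ := Finset.mem_add.mp hmem2
      exact ⟨a', ha', b, hb, hab.symm⟩
    refine Finset.mem_biUnion.mpr ⟨B, hBmem, Finset.mem_biUnion.mpr ⟨c, ?_,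
      Finset.mem_biUnion.mpr ⟨A, ?_, ?_⟩⟩⟩
    · exact Finset.mem_filter.mpr ⟨mem_QB k B A c hAne (le_of_eq hAcard) hall, hcB⟩
    · refine Finset.mem_filter.mpr ⟨hAmem, ?_⟩
      intro a ha
      obtain ⟨a', ha', b, hb, hab⟩ := hall a ha
      refine ⟨c - b, Finset.mem_image.mpr ⟨b, hb, rfl⟩, ?_⟩
      have : a + (c - b) = a' := by omega
      rwa [this]
    · refine Finset.mem_product.mpr ⟨Finset.mem_singleton_self _, Finset.mem_powerset.mpr ?_⟩
      intro c' hc'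
      obtain ⟨a0, ha0⟩ := hAne
      have hmem3 : a0 + c' ∈ A + B := by
        rw [heq]
        exact Finset.add_mem_add ha0 hc'
      have : c' = (a0 + c') - a0 := by omega
      rw [this]
      exact Finset.sub_mem_sub hmem3 ha0
  -- the cardinality chain
  have hcard : (((P ×ˢ P) ×ˢ P).filter
        (fun q => q.1.2 ≠ q.2 ∧ q.1.1 + q.1.2 = q.1.1 + q.2)).card ≤
      N.choose k * ((k * k ^ k) * ((N.choose (k / 2) * D2) * 2 ^ (k * k * k))) := by
    refine le_trans (Finset.card_le_card hsub) ?_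
    have hPcard : P.card = N.choose k := by
      rw [hP, Finset.card_powersetCard]
      congr 1
      rw [Int.card_Icc]
      simp
    refine le_trans (Finset.card_biUnion_le_card_mul _ _ _ ?_) (by rw [hPcard])
    intro B hB
    obtain ⟨hBsub, hBcard⟩ := Finset.mem_powersetCard.mp hB
    refine le_trans (Finset.card_biUnion_le_card_mul _ _
      ((N.choose (k / 2) * D2) * 2 ^ (k * k * k)) ?_) ?_
    · intro c hc
      obtain ⟨hcQ, hcB⟩ := Finset.mem_filter.mp hc
      refine le_trans (Finset.card_biUnion_le_card_mul _ _ (2 ^ (k * k * k)) ?_) ?_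
      · intro A hA
        obtain ⟨hAP, hAprop⟩ := Finset.mem_filter.mp hA
        obtain ⟨hAsub, hAcard⟩ := Finset.mem_powersetCard.mp hAP
        rw [Finset.card_product, Finset.card_singleton, one_mul, Finset.card_powerset]
        refine Nat.pow_le_pow_right (by omega) ?_
        calc (A + B - A).card ≤ (A + B).card * A.card := Finset.card_sub_le
          _ ≤ (A.card * B.card) * A.card :=
              Nat.mul_le_mul_right _ Finset.card_add_le
          _ ≤ k * k * k := by rw [hAcard, hBcard]
      · refine Nat.mul_le_mul_right _ ?_
        have hE0 : (0 : ℤ) ∉ B.image (fun b => c - b) := by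
          intro h
          obtain ⟨b, hb, hb0⟩ := Finset.mem_image.mp h
          have : c = b := by omega
          exact hcB (this ▸ hb)
        have hEcard : (B.image (fun b => c - b)).card ≤ k :=
          le_trans Finset.card_image_le (le_of_eq hBcard)
        exact count_A k N (B.image (fun b => c - b)) hE0 hEcard
    · refine Nat.mul_le_mul_right _ ?_
      calc ((QB k B).filter (fun c => c ∉ B)).card ≤ (QB k B).card :=
            Finset.card_le_card (Finset.filter_subset _ _)
        _ ≤ k * k ^ k := QB_card_le k B (le_of_eq hBcard)
  -- pass to powers of N
  have hcard2 : (((P ×ˢ P) ×ˢ P).filter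
        (fun q => q.1.2 ≠ q.2 ∧ q.1.1 + q.1.2 = q.1.1 + q.2)).card ≤
      Ck * N ^ (k + k / 2) := by
    calc (((P ×ˢ P) ×ˢ P).filter
          (fun q => q.1.2 ≠ q.2 ∧ q.1.1 + q.1.2 = q.1.1 + q.2)).card
        ≤ N.choose k * ((k * k ^ k) * ((N.choose (k / 2) * D2) * 2 ^ (k * k * k))) := hcard
      _ ≤ N ^ k * ((k * k ^ k) * ((N ^ (k / 2) * D2) * 2 ^ (k * k * k))) := by
          gcongr <;> exact Nat.choose_le_pow _ _
      _ = ((k * k ^ k) * (D2 * 2 ^ (k * k * k))) * (N ^ k * N ^ (k / 2)) := by ring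
      _ ≤ Ck * (N ^ k * N ^ (k / 2)) := by
          refine Nat.mul_le_mul_right _ ?_
          rw [hCkdef]
          omega
      _ = Ck * N ^ (k + k / 2) := by rw [pow_add]
  -- real-number conclusion
  have hreal : ((((((P ×ˢ P) ×ˢ P).filter
        (fun q => q.1.2 ≠ q.2 ∧ q.1.1 + q.1.2 = q.1.1 + q.2)).card : ℕ)) : ℝ) ≤
      (Ck : ℝ) * ((N : ℝ) ^ (k + k / 2 : ℕ)) := by
    have := hcard2
    exact_mod_cast this
  refine le_trans hreal ?_
  refine mul_le_mul_of_nonneg_left ?_ (by positivity)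
  rcases Nat.eq_zero_or_pos N with rfl | hN
  · rw [Nat.cast_zero, zero_pow (by omega), Real.zero_rpow (by positivity)]
  · rw [← Real.rpow_natCast]
    refine Real.rpow_le_rpow_of_exponent_le (by exact_mod_cast hN) ?_
    push_cast
    have h1 : ((k / 2 : ℕ) : ℝ) ≤ (k : ℝ) / 2 := Nat.cast_div_le
    push_cast at h1
    linarith
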